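/- If a reduced word u over the alphabet {g_1^{±1},...,g_k^{±1}} appears cyclically in a cyclically reduced word w both as u and as u^{-1}, then these two appearances cannot overlap (not even at their endpoints). -/

import Mathlib

/-- A letter `g_i^{±1}` of the alphabet `Σ_k`. -/
abbrev Letter (k : ℕ) := Fin k × Bool

/-- The inverse letter: `(g_i^{α})⁻¹ = g_i^{-α}`. -/
def Letter.inv {k : ℕ} (x : Letter k) : Letter k := (x.1, !x.2)

theorem modLt {α : Type*} {w : List α} (hw : w ≠ []) (x : ℕ) : x % w.length < w.length :=
  Nat.mod_lt _ (List.length_pos_iff.mpr hw)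

/-- `w` is cyclically reduced: no two cyclically consecutive letters are mutually inverse. -/
def CyclicallyReduced {k : ℕ} (w : List (Letter k)) : Prop :=
  ∀ i : Fin w.length,
    w.get ⟨((i : ℕ) + 1) % w.length, Nat.mod_lt _ i.pos⟩ ≠ Letter.inv (w.get i)

/-- `u` is a reduced word. -/
def Reduced {k : ℕ} (u : List (Letter k)) : Prop :=
  ∀ i, (h : i + 1 < u.length) →
    u.get ⟨i + 1, h⟩ ≠ Letter.inv (u.get ⟨i, Nat.lt_of_succ_lt h⟩)

/-- `u` appears, as `u`, cyclically in `w` starting at position `p`. -/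
def AppearsAt {k : ℕ} (u w : List (Letter k)) (p : ℕ) (hw : w ≠ []) : Prop :=
  ∀ l, (h : l < u.length) →
    u.get ⟨l, h⟩ = w.get ⟨(p + l) % w.length, modLt hw _⟩

/-- `u⁻¹` (the reversed word with inverted letters) appears cyclically in `w`
starting at position `q`. -/
def InvAppearsAt {k : ℕ} (u w : List (Letter k)) (q : ℕ) (hw : w ≠ []) : Prop :=
  ∀ l, (h : l < u.length) →
    Letter.inv (u.get ⟨u.length - 1 - l, by omega⟩)
      = w.get ⟨(q + l) % w.length, modLt hw _⟩

lemma get_eq_get {α : Type*} (w : List α) {i j : ℕ} (hi : i < w.length)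
    (hj : j < w.length) (h : i = j) : w.get ⟨i, hi⟩ = w.get ⟨j, hj⟩ := by
  subst h; rfl

/-- If a reduced word `u` appears cyclically in a cyclically reduced word `w` both as `u`
(at position `p`) and as `u⁻¹` (at position `q`), then the two appearances cannot
overlap, not even at their endpoints: the cyclic intervals `[p, p+|u|]` and `[q, q+|u|]`
are disjoint. -/
theorem stmt0 {k : ℕ} (w u : List (Letter k)) (hw : w ≠ [])
    (hcyc : CyclicallyReduced w) (hured : Reduced u) (hu : u ≠ [])
    (p q : ℕ) (hp : AppearsAt u w p hw) (hq : InvAppearsAt u w q hw) :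
    ¬ ∃ s t, s ≤ u.length ∧ t ≤ u.length ∧ (p + s) % w.length = (q + t) % w.length := by
  rintro ⟨s, t, hs, ht, hst⟩
  have hn1 : 0 < w.length := List.length_pos_iff.mpr hw
  have hm1 : 0 < u.length := List.length_pos_iff.mpr hu
  set n := w.length with hn
  set m := u.length with hm
  have key : ∀ l l', l + t = l' + s → (p + l) % n = (q + l') % n := by
    intro l l' hll'
    have hsn : s ≤ s * n := Nat.le_mul_of_pos_right _ hn1
    have e1 : (p + l) % n = (p + l + s * n) % n := (Nat.add_mul_mod_self_right _ _ _).symm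
    have e2 : p + l + s * n = p + s + (s * n - s + l) := by omega
    have e3 : q + t + (s * n - s + l) = q + l' + s * n := by omega
    have e4 : (p + s + (s * n - s + l)) % n = (q + t + (s * n - s + l)) % n :=
      Nat.ModEq.add_right _ hst
    rw [e1, e2, e4, e3, Nat.add_mul_mod_self_right]
  by_cases hA : t = s + m
  · -- s = 0, t = m : q-interval ends where p-interval starts
    have h1 := hp 0 hm1
    have h2 := hq (m - 1) (by omega)
    have hc := hcyc ⟨(q + (m - 1)) % n, Nat.mod_lt _ hn1⟩
    apply hc
    have e : ((q + (m - 1)) % n + 1) % n = (p + 0) % n := by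
      rw [Nat.mod_add_mod]
      have e' : q + (m - 1) + 1 = q + m := by omega
      rw [e']
      exact (key 0 m (by omega)).symm
    calc w.get ⟨((q + (m - 1)) % n + 1) % n, _⟩
        = w.get ⟨(p + 0) % n, modLt hw _⟩ := get_eq_get w _ _ e
      _ = u.get ⟨0, hm1⟩ := h1.symm
      _ = Letter.inv (Letter.inv (u.get ⟨0, hm1⟩)) := by simp [Letter.inv]
      _ = Letter.inv (Letter.inv (u.get ⟨m - 1 - (m - 1), by omega⟩)) :=
            congrArg (fun x => Letter.inv (Letter.inv x))
              (get_eq_get u hm1 (by omega) (by omega))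
      _ = Letter.inv (w.get ⟨(q + (m - 1)) % n, modLt hw _⟩) := by rw [h2]
  · by_cases hB : s = t + m
    · -- s = m, t = 0 : p-interval ends where q-interval starts
      have h1 := hq 0 hm1
      have h2 := hp (m - 1) (by omega)
      have hc := hcyc ⟨(p + (m - 1)) % n, Nat.mod_lt _ hn1⟩
      apply hc
      have e : ((p + (m - 1)) % n + 1) % n = (q + 0) % n := by
        rw [Nat.mod_add_mod]
        have e' : p + (m - 1) + 1 = p + m := by omega
        rw [e']
        exact key m 0 (by omega)
      calc w.get ⟨((p + (m - 1)) % n + 1) % n, _⟩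
          = w.get ⟨(q + 0) % n, modLt hw _⟩ := get_eq_get w _ _ e
        _ = Letter.inv (u.get ⟨m - 1 - 0, by omega⟩) := h1.symm
        _ = Letter.inv (u.get ⟨m - 1, by omega⟩) :=
              congrArg Letter.inv (get_eq_get u (by omega) (by omega) (by omega))
        _ = Letter.inv (w.get ⟨(p + (m - 1)) % n, modLt hw _⟩) := by rw [h2]
    · -- genuine overlap: look at the middle of the overlap
      obtain ⟨l, j, hl, hj, hsum, hlj⟩ :
          ∃ l j, l < m ∧ j < m ∧ l + j + t = m - 1 + s ∧ (j = l ∨ j = l + 1) :=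
        ⟨(m - 1 + s - t) / 2, (m - 1 + s - t) - (m - 1 + s - t) / 2,
          by omega, by omega, by omega, by omega⟩
      have h1 := hp l hl
      have h2 := hq (m - 1 - j) (by omega)
      have hk : (p + l) % n = (q + (m - 1 - j)) % n := key l _ (by omega)
      have heq : u.get ⟨l, hl⟩ = Letter.inv (u.get ⟨j, hj⟩) :=
        h1.trans ((get_eq_get w (modLt hw _) (modLt hw _) hk).trans
          (h2.symm.trans (congrArg Letter.inv
            (get_eq_get u (by omega) hj (by omega)))))
      rcases hlj with h | h
      · subst h
        exact absurd (congrArg Prod.snd heq) (by simp [Letter.inv])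
      · subst h
        apply hured l hj
        rw [heq]
        simp [Letter.inv]
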